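/- Let λ ∈ ℝ with λ ≠ 0, T > 0, B > 0, and let w : [0,T] → ℝ be measurable with w(t) > 0 for almost every t, with t ↦ e^{λ(T−t)}·w(t) integrable and ∫₀ᵀ w(t)^{−2} dt ≤ B. Then ∫₀ᵀ e^{λ(T−t)}·w(t) dt ≥ B^{−1/2}·( 3(e^{2λT/3} − 1)/(2λ) )^{3/2}. -/

import Mathlib

open MeasureTheory Set

lemma exp_int_aux (a T : ℝ) (ha : a ≠ 0) :
    ∫ t in (0:ℝ)..T, Real.exp (a*(T-t)) = (Real.exp (a*T) - 1)/a := by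
  have h : ∀ t : ℝ, Real.exp (a*(T-t)) = Real.exp (a*T) * Real.exp ((-a)*t) := by
    intro t; rw [← Real.exp_add]; ring_nf
  simp_rw [h]
  rw [intervalIntegral.integral_const_mul,
    intervalIntegral.integral_comp_mul_left Real.exp (neg_ne_zero.2 ha)]
  simp [integral_exp, Real.exp_neg]
  field_simp
  ring


/-- Under the computational budget `∫₀ᵀ (w t)⁻² dt ≤ B` (Lebesgue integral,
possibly infinite, hence stated via `lintegral`), the final-time error satisfies
`∫₀ᵀ e^{λ(T−t)} w t dt ≥ B^{−1/2} (3(e^{2λT/3} − 1)/(2λ))^{3/2}`. -/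
theorem stmt_2 (lam T B : ℝ) (hlam : lam ≠ 0) (hT : 0 < T) (hB : 0 < B)
    (w : ℝ → ℝ) (hmeas : Measurable w)
    (hpos : ∀ᵐ t ∂(volume.restrict (Icc (0:ℝ) T)), 0 < w t)
    (hint : IntegrableOn (fun t => Real.exp (lam * (T - t)) * w t) (Icc 0 T))
    (hbudget : (∫⁻ t in Icc (0:ℝ) T, ENNReal.ofReal ((w t ^ 2)⁻¹)) ≤ ENNReal.ofReal B) :
    B ^ (-(1:ℝ)/2) * (3 * (Real.exp (2 * lam * T / 3) - 1) / (2 * lam)) ^ ((3:ℝ)/2) ≤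
      ∫ t in (0:ℝ)..T, Real.exp (lam * (T - t)) * w t := by
  set μ := volume.restrict (Icc (0:ℝ) T) with hμ
  set a : ℝ := 2*lam/3 with ha_def
  have ha : a ≠ 0 := by simp [ha_def]; exact hlam
  set J : ℝ := (Real.exp (a*T) - 1)/a with hJ_def
  have hJpos : 0 < J := by
    rcases ha.lt_or_gt with h | h
    · apply div_pos_of_neg_of_neg
      · simp only [sub_neg]
        exact Real.exp_lt_one_iff.mpr (mul_neg_of_neg_of_pos h hT)
      · exact h
    · apply div_pos _ h
      simp only [sub_pos]
      have := Real.exp_lt_exp.mpr (mul_pos h hT)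
      simpa using this
  -- functions
  set F : ℝ → ENNReal := fun t => ENNReal.ofReal (Real.exp (lam*(T-t)) * w t) with hF_def
  set G : ℝ → ENNReal := fun t => ENNReal.ofReal ((w t ^ 2)⁻¹) with hG_def
  have hFm : Measurable F := by
    apply ENNReal.measurable_ofReal.comp
    exact (Real.measurable_exp.comp ((measurable_const.sub measurable_id).const_mul lam)).mul hmeas
  have hGm : Measurable G := by
    apply ENNReal.measurable_ofReal.comp
    exact (hmeas.pow_const 2).inv
  have hconj : (3/2 : ℝ).HolderConjugate 3 := ⟨by norm_num, by norm_num, by norm_num⟩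
  have holder := ENNReal.lintegral_mul_le_Lp_mul_Lq μ hconj
    (f := fun t => F t ^ (2/3 : ℝ)) (g := fun t => G t ^ (1/3 : ℝ))
    ((hFm.pow_const _).aemeasurable) ((hGm.pow_const _).aemeasurable)
  -- simplify RHS exponents
  have hrhs1 : ∀ t, (F t ^ (2/3:ℝ)) ^ (3/2:ℝ) = F t := by
    intro t; rw [← ENNReal.rpow_mul]; norm_num
  have hrhs2 : ∀ t, (G t ^ (1/3:ℝ)) ^ (3:ℝ) = G t := by
    intro t; rw [← ENNReal.rpow_mul]; norm_num
  simp_rw [hrhs1, hrhs2] at holder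
  -- a.e. identify the left integrand
  have hae : ∀ᵐ t ∂μ, F t ^ (2/3:ℝ) * G t ^ (1/3:ℝ) = ENNReal.ofReal (Real.exp (a*(T-t))) := by
    filter_upwards [hpos] with t hw
    rw [hF_def, hG_def]
    rw [ENNReal.ofReal_rpow_of_pos (mul_pos (Real.exp_pos _) hw),
      ENNReal.ofReal_rpow_of_pos (by positivity),
      ← ENNReal.ofReal_mul (by positivity)]
    congr 1
    have hw2 : ((w t ^ 2)⁻¹ : ℝ) ^ (1/3:ℝ) = w t ^ (-(2/3) : ℝ) := by
      rw [← Real.rpow_natCast (w t) 2, ← Real.rpow_neg hw.le, ← Real.rpow_mul hw.le]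
      norm_num
    rw [Real.mul_rpow (Real.exp_pos _).le hw.le, hw2, ← Real.exp_mul, mul_assoc,
      ← Real.rpow_add hw]
    norm_num
    rw [ha_def]; ring
  simp only [Pi.mul_apply] at holder
  rw [lintegral_congr_ae hae] at holder
  -- compute pieces
  have hJint : IntegrableOn (fun t => Real.exp (a*(T-t))) (Icc (0:ℝ) T) :=
    (Real.continuous_exp.comp (continuous_const.mul (continuous_const.sub continuous_id))).integrableOn_Icc
  have hJeq : (∫⁻ t, ENNReal.ofReal (Real.exp (a*(T-t))) ∂μ) = ENNReal.ofReal J := by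
    rw [← ofReal_integral_eq_lintegral_ofReal hJint
      (Filter.Eventually.of_forall fun t => (Real.exp_pos _).le)]
    congr 1
    rw [integral_Icc_eq_integral_Ioc, ← intervalIntegral.integral_of_le hT.le]
    exact exp_int_aux a T ha
  set I : ℝ := ∫ t in Icc (0:ℝ) T, Real.exp (lam*(T-t)) * w t with hI_def
  have hInn : 0 ≤ᶠ[ae μ] fun t => Real.exp (lam*(T-t)) * w t := by
    filter_upwards [hpos] with t hw; positivity
  have hIeq : (∫⁻ t, F t ∂μ) = ENNReal.ofReal I := by
    rw [hF_def, ← ofReal_integral_eq_lintegral_ofReal hint hInn]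
  have hInonneg : 0 ≤ I := integral_nonneg_of_ae hInn
  -- assemble ENNReal inequality
  have key : ENNReal.ofReal J ≤ ENNReal.ofReal (I ^ (2/3:ℝ) * B ^ (1/3:ℝ)) := by
    calc ENNReal.ofReal J = ∫⁻ t, ENNReal.ofReal (Real.exp (a*(T-t))) ∂μ := hJeq.symm
      _ ≤ (∫⁻ t, F t ∂μ) ^ (1/(3/2:ℝ)) * (∫⁻ t, G t ∂μ) ^ (1/(3:ℝ)) := holder
      _ ≤ (ENNReal.ofReal I) ^ (1/(3/2:ℝ)) * (ENNReal.ofReal B) ^ (1/(3:ℝ)) := by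
          rw [hIeq]
          exact mul_le_mul_right (ENNReal.rpow_le_rpow hbudget (by norm_num)) _
      _ = ENNReal.ofReal (I ^ (2/3:ℝ) * B ^ (1/3:ℝ)) := by
          rw [ENNReal.ofReal_mul (by positivity)]
          norm_num
          rw [← ENNReal.ofReal_rpow_of_nonneg hInonneg (by norm_num),
            ← ENNReal.ofReal_rpow_of_nonneg hB.le (by norm_num)]
  have hreal : J ≤ I ^ (2/3:ℝ) * B ^ (1/3:ℝ) :=
    (ENNReal.ofReal_le_ofReal_iff (by positivity)).mp key
  -- derive lower bound on I
  have h32 : J ^ (3/2:ℝ) ≤ I * B ^ (1/2:ℝ) := by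
    calc J ^ (3/2:ℝ) ≤ (I ^ (2/3:ℝ) * B ^ (1/3:ℝ)) ^ (3/2:ℝ) :=
          Real.rpow_le_rpow hJpos.le hreal (by norm_num)
      _ = I * B ^ (1/2:ℝ) := by
          rw [Real.mul_rpow (by positivity) (by positivity),
            ← Real.rpow_mul hInonneg, ← Real.rpow_mul hB.le]
          norm_num
  -- finish
  have hC : (3 * (Real.exp (2 * lam * T / 3) - 1) / (2 * lam)) = J := by
    rw [hJ_def, ha_def]
    have h1 : 2*lam/3*T = 2*lam*T/3 := by ring
    rw [h1]
    field_simp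
  have hIval : (∫ t in (0:ℝ)..T, Real.exp (lam * (T - t)) * w t) = I := by
    rw [hI_def, integral_Icc_eq_integral_Ioc, ← intervalIntegral.integral_of_le hT.le]
  rw [hIval, hC]
  have hBpow : B ^ (-(1:ℝ)/2) * B ^ ((1:ℝ)/2) = 1 := by
    rw [← Real.rpow_add hB]; norm_num
  calc B ^ (-(1:ℝ)/2) * J ^ ((3:ℝ)/2)
      ≤ B ^ (-(1:ℝ)/2) * (I * B ^ (1/2:ℝ)) := by
        apply mul_le_mul_of_nonneg_left _ (by positivity)
        convert h32 using 2
    _ = I * (B ^ (-(1:ℝ)/2) * B ^ ((1:ℝ)/2)) := by ring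
    _ = I := by rw [hBpow, mul_one]
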